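/- The derivative of v explodes at the origin: lim_{x↓0} v'(x) = ∞. -/

import Mathlib

open Set Filter Topology

lemma tangent_line_aux {U U' : ℝ → ℝ}
    (hU'deriv : ∀ y > (0 : ℝ), HasDerivAt U (U' y) y)
    (hanti : StrictAntiOn U' (Ioi 0))
    {a b : ℝ} (ha : 0 < a) (hb : 0 < b) :
    U b - U a ≤ U' a * (b - a) := by
  rcases lt_trichotomy a b with h | h | h
  · obtain ⟨c, hc, hceq⟩ := exists_hasDerivAt_eq_slope U U' h
      (fun x hx => (hU'deriv x (lt_of_lt_of_le ha hx.1)).continuousAt.continuousWithinAt)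
      (fun x hx => hU'deriv x (ha.trans hx.1))
    have h1 : U b - U a = U' c * (b - a) := by
      rw [eq_div_iff (sub_ne_zero.2 h.ne')] at hceq
      linarith
    have h2 : U' c ≤ U' a := (hanti (mem_Ioi.2 ha) (mem_Ioi.2 (ha.trans hc.1)) hc.1).le
    nlinarith
  · simp [h]
  · obtain ⟨c, hc, hceq⟩ := exists_hasDerivAt_eq_slope U U' h
      (fun x hx => (hU'deriv x (lt_of_lt_of_le hb hx.1)).continuousAt.continuousWithinAt)
      (fun x hx => hU'deriv x (hb.trans hx.1))
    have h1 : U a - U b = U' c * (a - b) := by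
      rw [eq_div_iff (sub_ne_zero.2 h.ne')] at hceq
      linarith
    have h2 : U' a ≤ U' c := (hanti (mem_Ioi.2 (hb.trans hc.1)) (mem_Ioi.2 (hb.trans h)) hc.2).le
    nlinarith

set_option maxHeartbeats 1000000 in
theorem hjb_solution_deriv_explodes_at_zero
    (α μ σ β : ℝ) (hα0 : 0 < α) (hα1 : α < 1) (hμ : 0 < μ) (hσ : 0 < σ) (hβ : 0 < β)
    (U U' U'' : ℝ → ℝ)
    (hUcont : ContinuousOn U (Ici 0)) (hU0 : U 0 = 0)
    (hU'deriv : ∀ y > (0 : ℝ), HasDerivAt U (U' y) y)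
    (hU''deriv : ∀ y > (0 : ℝ), HasDerivAt U' (U'' y) y)
    (hU''cont : ContinuousOn U'' (Ioi 0))
    (hU'pos : ∀ y > (0 : ℝ), 0 < U' y)
    (hU''neg : ∀ y > (0 : ℝ), U'' y < 0)
    (hU'0 : Tendsto U' (𝓝[>] 0) atTop)
    (hU'top : Tendsto U' atTop (𝓝 0))
    (I : ℝ → ℝ)
    (hIpos : ∀ p > (0 : ℝ), 0 < I p)
    (hIright : ∀ p > (0 : ℝ), U' (I p) = p)
    (hIleft : ∀ y > (0 : ℝ), I (U' y) = y)
    (v v' v'' : ℝ → ℝ)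
    (hv'deriv : ∀ x > (0 : ℝ), HasDerivAt v (v' x) x)
    (hv''deriv : ∀ x > (0 : ℝ), HasDerivAt v' (v'' x) x)
    (hv''cont : ContinuousOn v'' (Ioi 0))
    (hconc : ConcaveOn ℝ (Ioi 0) v)
    (hv'pos : ∀ x > (0 : ℝ), 0 < v' x)
    (hHJB : ∀ x > (0 : ℝ), β * v x =
      (1 / 2) * σ ^ 2 * x ^ 2 * v'' x + (x ^ α - μ * x) * v' x
        + U (I (v' x)) - v' x * I (v' x)) :
    Tendsto v' (𝓝[>] 0) atTop := by
  -- U' is strictly antitone on (0,∞)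
  have hU'anti : StrictAntiOn U' (Ioi 0) := by
    apply strictAntiOn_of_deriv_neg (convex_Ioi 0)
    · exact fun y hy => (hU''deriv y hy).continuousAt.continuousWithinAt
    · intro y hy
      rw [interior_Ioi] at hy
      rw [(hU''deriv y hy).deriv]
      exact hU''neg y hy
  have tangent : ∀ a b : ℝ, 0 < a → 0 < b → U b - U a ≤ U' a * (b - a) :=
    fun a b ha hb => tangent_line_aux hU'deriv hU'anti ha hb
  obtain ⟨g, hg⟩ : ∃ g : ℝ → ℝ, g = fun p => U (I p) - p * I p := ⟨_, rfl⟩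
  have hIanti : ∀ p q : ℝ, 0 < p → p ≤ q → I q ≤ I p := by
    intro p q hp hpq
    by_contra hcon
    push_neg at hcon
    have h1 : U' (I q) < U' (I p) :=
      hU'anti (mem_Ioi.2 (hIpos p hp)) (mem_Ioi.2 (hIpos q (lt_of_lt_of_le hp hpq))) hcon
    rw [hIright p hp, hIright q (hp.trans_le hpq)] at h1
    linarith
  have hganti : ∀ p q : ℝ, 0 < p → p ≤ q → g q ≤ g p := by
    intro p q hp hpq
    have hq := hp.trans_le hpq
    have hIq := hIpos q hq
    have h1 := tangent (I p) (I q) (hIpos p hp) hIq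
    rw [hIright p hp] at h1
    simp only [hg]
    nlinarith [mul_nonneg (sub_nonneg.2 hpq) hIq.le]
  have hgdiff : ∀ p q : ℝ, 0 < p → p ≤ q → g p - g q ≤ (q - p) * I p := by
    intro p q hp hpq
    have hq := hp.trans_le hpq
    have h1 := tangent (I q) (I p) (hIpos q hq) (hIpos p hp)
    rw [hIright q hq] at h1
    simp only [hg]
    nlinarith
  -- v' is antitone on (0,∞)
  have hv'anti : ∀ x y : ℝ, 0 < x → x ≤ y → v' y ≤ v' x := by
    intro x y hx hxy
    rcases eq_or_lt_of_le hxy with rfl | h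
    · exact le_refl _
    have hy := hx.trans h
    have h1 : v' y ≤ slope v x y :=
      hconc.le_slope_of_hasDerivAt (mem_Ioi.2 hx) (mem_Ioi.2 hy) h (hv'deriv y hy)
    have h2 : slope v x y ≤ v' x :=
      hconc.slope_le_of_hasDerivAt (mem_Ioi.2 hx) (mem_Ioi.2 hy) h (hv'deriv x hx)
    linarith
  -- v'' ≤ 0
  have hv''nonpos : ∀ x : ℝ, 0 < x → v'' x ≤ 0 := by
    intro x hx
    have hd : HasDerivWithinAt v' (v'' x) (Ioi x) x := (hv''deriv x hx).hasDerivWithinAt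
    rw [hasDerivWithinAt_iff_tendsto_slope] at hd
    have hset : Ioi x \ {x} = Ioi x := diff_singleton_eq_self (by simp)
    rw [hset] at hd
    refine le_of_tendsto hd ?_
    filter_upwards [self_mem_nhdsWithin] with y hy
    rw [slope_def_field]
    apply div_nonpos_of_nonpos_of_nonneg
    · exact sub_nonpos.2 (hv'anti x y hx (le_of_lt hy))
    · exact sub_nonneg.2 (le_of_lt hy)
  -- mean value theorem for v
  have hMVT : ∀ x y : ℝ, 0 < x → x < y → ∃ c, x < c ∧ c < y ∧ v y - v x = v' c * (y - x) := by
    intro x y hx hxy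
    obtain ⟨c, hc, hceq⟩ := exists_hasDerivAt_eq_slope v v' hxy
      (fun t ht => (hv'deriv t (lt_of_lt_of_le hx ht.1)).continuousAt.continuousWithinAt)
      (fun t ht => hv'deriv t (hx.trans ht.1))
    refine ⟨c, hc.1, hc.2, ?_⟩
    rw [eq_div_iff (sub_ne_zero.2 hxy.ne')] at hceq
    linarith
  -- main claim : v' is unbounded
  have key : ∀ M : ℝ, ∃ x : ℝ, 0 < x ∧ M ≤ v' x := by
    by_contra hcon
    push_neg at hcon
    obtain ⟨M, hM⟩ := hcon
    -- hM : ∀ x, 0 < x → v' x < M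
    obtain ⟨v₁, hv₁def⟩ : ∃ t : ℝ, t = v' 1 := ⟨_, rfl⟩
    have hv₁ : 0 < v₁ := by rw [hv₁def]; exact hv'pos 1 one_pos
    have hne : (v' '' Ioi 0).Nonempty := ⟨v' 1, ⟨1, mem_Ioi.2 one_pos, rfl⟩⟩
    have hbdd : BddAbove (v' '' Ioi 0) := by
      refine ⟨M, ?_⟩
      rintro y ⟨x, hx, rfl⟩
      exact (hM x (mem_Ioi.1 hx)).le
    obtain ⟨L, hLdef⟩ : ∃ t : ℝ, t = sSup (v' '' Ioi 0) := ⟨_, rfl⟩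
    have hL1 : ∀ x : ℝ, 0 < x → v' x ≤ L := by
      intro x hx
      rw [hLdef]
      exact le_csSup hbdd ⟨x, mem_Ioi.2 hx, rfl⟩
    have hLapprox : ∀ ε : ℝ, 0 < ε → ∃ x, 0 < x ∧ x ≤ 1 ∧ L - ε < v' x := by
      intro ε hε
      obtain ⟨y, ⟨x, hx, rfl⟩, hy⟩ := exists_lt_of_lt_csSup hne
        (by rw [← hLdef]; linarith : L - ε < sSup (v' '' Ioi 0))
      rw [mem_Ioi] at hx
      exact ⟨min x 1, lt_min hx one_pos, min_le_right _ _,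
        lt_of_lt_of_le hy (hv'anti _ x (lt_min hx one_pos) (min_le_left _ _))⟩
    have hLv₁ : v₁ ≤ L := by rw [hv₁def]; exact hL1 1 one_pos
    have hL0 : 0 < L := lt_of_lt_of_le hv₁ hLv₁
    -- bounds for v near 0
    have hvmono : ∀ x y : ℝ, 0 < x → x ≤ y → v x ≤ v y := by
      intro x y hx hxy
      rcases eq_or_lt_of_le hxy with rfl | h
      · exact le_refl _
      obtain ⟨c, hc1, hc2, hc3⟩ := hMVT x y hx h
      nlinarith [hv'pos c (hx.trans hc1)]
    have hvlip : ∀ x y : ℝ, 0 < x → x ≤ y → v y - v x ≤ L * (y - x) := by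
      intro x y hx hxy
      rcases eq_or_lt_of_le hxy with rfl | h
      · simp
      obtain ⟨c, hc1, hc2, hc3⟩ := hMVT x y hx h
      nlinarith [hL1 c (hx.trans hc1)]
    have hvne : (v '' Ioc 0 1).Nonempty := ⟨v 1, ⟨1, mem_Ioc.2 ⟨one_pos, le_refl 1⟩, rfl⟩⟩
    have hvbdd : BddBelow (v '' Ioc 0 1) := by
      refine ⟨v 1 - L, ?_⟩
      rintro y ⟨x, hx, rfl⟩
      rw [mem_Ioc] at hx
      have h1 := hvlip x 1 hx.1 hx.2
      nlinarith [hx.1, mul_nonneg hL0.le hx.1.le]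
    obtain ⟨v₀, hv₀def⟩ : ∃ t : ℝ, t = sInf (v '' Ioc 0 1) := ⟨_, rfl⟩
    have hv₀le : ∀ x : ℝ, 0 < x → x ≤ 1 → v₀ ≤ v x := by
      intro x hx hx1
      rw [hv₀def]
      exact csInf_le hvbdd ⟨x, mem_Ioc.2 ⟨hx, hx1⟩, rfl⟩
    have hvub : ∀ x : ℝ, 0 < x → x ≤ 1 → v x ≤ v₀ + L * x := by
      intro x hx hx1
      have hlb : v x - L * x ≤ v₀ := by
        rw [hv₀def]
        apply le_csInf hvne
        rintro b ⟨y, hy, rfl⟩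
        rw [mem_Ioc] at hy
        rcases le_or_gt x y with h | h
        · have := hvmono x y hx h
          nlinarith [mul_nonneg hL0.le hx.le]
        · have := hvlip y x hy.1 h.le
          nlinarith [mul_nonneg hL0.le hy.1.le]
      linarith
    -- HJB rearranged
    have hHJB' : ∀ x : ℝ, 0 < x →
        (1/2) * σ^2 * x^2 * v'' x = β * v x - (x ^ α - μ * x) * v' x - g (v' x) := by
      intro x hx
      have h := hHJB x hx
      simp only [hg]
      linarith
    have hHJBle : ∀ x : ℝ, 0 < x → β * v x ≤ (x ^ α - μ * x) * v' x + g (v' x) := by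
      intro x hx
      have h1 := hHJB' x hx
      have h2 : (1/2) * σ^2 * x^2 * v'' x ≤ 0 := by
        have h3 := hv''nonpos x hx
        have hp : (0:ℝ) < (1/2) * σ^2 * x^2 := by positivity
        nlinarith
      linarith
    -- Step A : β v₀ ≤ g L
    have hIv₁ := hIpos v₁ hv₁
    have hA : β * v₀ ≤ g L := by
      have main : ∀ ε : ℝ, 0 < ε → β * v₀ ≤ g L + ε * (1 + I v₁) := by
        intro ε hε
        obtain ⟨x₀, hx₀, hx₀1, hx₀v⟩ := hLapprox ε hε
        have htend : Tendsto (fun x : ℝ => x ^ α) (𝓝[>] 0) (𝓝 0) := by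
          have h1 := (Real.continuousAt_rpow_const 0 α (Or.inr hα0.le)).tendsto
          rw [Real.zero_rpow hα0.ne'] at h1
          exact h1.mono_left nhdsWithin_le_nhds
        have hev : ∀ᶠ x in 𝓝[>] (0:ℝ), x ^ α * L < ε := by
          filter_upwards [htend.eventually (gt_mem_nhds (by positivity : (0:ℝ) < ε / L))]
            with x hx
          rw [← lt_div_iff₀ hL0]
          exact hx
        obtain ⟨x, h1, h2⟩ := (hev.and
          (eventually_of_mem (Ioc_mem_nhdsGT_of_mem ⟨le_refl (0:ℝ), hx₀⟩) fun y hy => hy)).exists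
        obtain ⟨hx0, hxle⟩ := h2
        have hx1 : x ≤ 1 := hxle.trans hx₀1
        have hvx := hv'pos x hx0
        have hvxL := hL1 x hx0
        have hvxv₁ : v₁ ≤ v' x := by rw [hv₁def]; exact hv'anti x 1 hx0 hx1
        have hvxx₀ : v' x₀ ≤ v' x := hv'anti x x₀ hx0 hxle
        have hhj := hHJBle x hx0
        have h2 : (x ^ α - μ * x) * v' x ≤ ε := by
          have hxa : 0 < x ^ α := Real.rpow_pos_of_pos hx0 α
          nlinarith [mul_pos (mul_pos hμ hx0) hvx, mul_le_mul_of_nonneg_left hvxL hxa.le]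
        have h3 : g (v' x) - g L ≤ (L - v' x) * I (v' x) := hgdiff (v' x) L hvx hvxL
        have h4 : I (v' x) ≤ I v₁ := hIanti v₁ (v' x) hv₁ hvxv₁
        have h5 : L - v' x ≤ ε := by linarith
        have h6 : g (v' x) ≤ g L + ε * I v₁ := by
          have hIpos' := hIpos (v' x) hvx
          nlinarith
        have h7 := hv₀le x hx0 hx1
        nlinarith [mul_le_mul_of_nonneg_left h7 hβ.le]
      by_contra hcon
      push_neg at hcon
      obtain ⟨ε, hεdef⟩ : ∃ t : ℝ, t = (β * v₀ - g L) / (2 * (1 + I v₁)) := ⟨_, rfl⟩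
      have hε : 0 < ε := by rw [hεdef]; exact div_pos (by linarith) (by positivity)
      have h1 := main ε hε
      have h2 : ε * (1 + I v₁) = (β * v₀ - g L) / 2 := by
        rw [hεdef]
        field_simp
      linarith
    -- Step B : quantitative blow-up of v''
    have hα2 : 0 < 1 - α := by linarith
    have htend2 : Tendsto (fun x : ℝ => x ^ (1 - α)) (𝓝[>] 0) (𝓝 0) := by
      have h1 := (Real.continuousAt_rpow_const 0 (1 - α) (Or.inr hα2.le)).tendsto
      rw [Real.zero_rpow hα2.ne'] at h1
      exact h1.mono_left nhdsWithin_le_nhds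
    have hev2 : ∀ᶠ x in 𝓝[>] (0:ℝ), (β + μ) * L * x ≤ (v₁ / 2) * x ^ α := by
      have hD : 0 < (β + μ) * L := by positivity
      filter_upwards [htend2.eventually
        (gt_mem_nhds (by positivity : (0:ℝ) < v₁ / (2 * ((β + μ) * L)))),
        self_mem_nhdsWithin] with x hx hx0
      have hx0' : (0:ℝ) < x := hx0
      have hxa : 0 < x ^ α := Real.rpow_pos_of_pos hx0' α
      have hsplit : x = x ^ (1 - α) * x ^ α := by
        rw [← Real.rpow_add hx0']
        norm_num
      have h4 : ((β + μ) * L) * (v₁ / (2 * ((β + μ) * L))) = v₁ / 2 := by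
        rw [mul_div_assoc']
        rw [div_eq_div_iff (by positivity) (by norm_num : (2:ℝ) ≠ 0)]
        ring
      have h2 : (β + μ) * L * x ^ (1 - α) ≤ v₁ / 2 := by
        nlinarith [mul_lt_mul_of_pos_left hx hD]
      calc (β + μ) * L * x = ((β + μ) * L * x ^ (1 - α)) * x ^ α := by
            nth_rewrite 1 [hsplit]; ring
        _ ≤ (v₁ / 2) * x ^ α := by nlinarith
    obtain ⟨u, hu, huP⟩ := mem_nhdsGT_iff_exists_Ioc_subset.1 hev2
    obtain ⟨x₂, hx₂def⟩ : ∃ t : ℝ, t = min u 1 := ⟨_, rfl⟩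
    have hu0 : (0:ℝ) < u := hu
    have hx₂0 : 0 < x₂ := by rw [hx₂def]; exact lt_min hu0 one_pos
    have hx₂1 : x₂ ≤ 1 := by rw [hx₂def]; exact min_le_right _ _
    have hP : ∀ x : ℝ, 0 < x → x ≤ x₂ → (β + μ) * L * x ≤ (v₁ / 2) * x ^ α := by
      intro x hx hxle
      rw [hx₂def] at hxle
      exact huP ⟨hx, hxle.trans (min_le_left _ _)⟩
    have hvpp : ∀ x : ℝ, 0 < x → x ≤ x₂ → v'' x ≤ -(v₁ / σ^2) * x ^ (α - 2) := by
      intro x hx hxle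
      have hx1 : x ≤ 1 := hxle.trans hx₂1
      have h1 := hHJB' x hx
      have h2 : g L ≤ g (v' x) := hganti (v' x) L (hv'pos x hx) (hL1 x hx)
      have h3 : v x ≤ v₀ + L * x := hvub x hx hx1
      have h4 : v₁ ≤ v' x := by rw [hv₁def]; exact hv'anti x 1 hx hx1
      have h5 := hP x hx hxle
      have hxa : 0 < x ^ α := Real.rpow_pos_of_pos hx α
      have h6 : (1/2) * σ^2 * x^2 * v'' x ≤ -(v₁/2) * x ^ α := by
        have hμx : μ * x * v' x ≤ μ * x * L := by
          nlinarith [hL1 x hx, mul_pos hμ hx]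
        have hxav : x ^ α * v₁ ≤ x ^ α * v' x := by nlinarith
        nlinarith [mul_le_mul_of_nonneg_left h3 hβ.le]
      have hx2eq : x ^ (α - 2) * x ^ (2:ℕ) = x ^ α := by
        rw [← Real.rpow_natCast x 2, ← Real.rpow_add hx]
        norm_num
      have hpos : (0:ℝ) < (1/2) * σ^2 * x^2 := by positivity
      rw [← mul_le_mul_iff_of_pos_right hpos]
      have key2 : -(v₁ / σ^2) * x ^ (α - 2) * ((1/2) * σ^2 * x^2) = -(v₁/2) * x ^ α := by
        rw [← hx2eq]
        field_simp
      rw [key2]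
      linarith
    -- comparison function h
    obtain ⟨C, hCdef⟩ : ∃ t : ℝ, t = v₁ / (σ^2 * (1 - α)) := ⟨_, rfl⟩
    have hC : 0 < C := by rw [hCdef]; positivity
    obtain ⟨h, hhdef⟩ : ∃ h : ℝ → ℝ, h = fun x : ℝ => v' x - C * x ^ (α - 1) := ⟨_, rfl⟩
    have hder : ∀ x : ℝ, 0 < x →
        HasDerivAt h (v'' x - C * ((α - 1) * x ^ (α - 2))) x := by
      intro x hx
      have h1 : HasDerivAt (fun x : ℝ => x ^ (α - 1)) ((α - 1) * x ^ (α - 1 - 1)) x :=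
        Real.hasDerivAt_rpow_const (Or.inl hx.ne')
      have h2 : α - 1 - 1 = α - 2 := by ring
      rw [h2] at h1
      rw [hhdef]
      exact (hv''deriv x hx).sub (h1.const_mul C)
    have hanti2 : AntitoneOn h (Ioc 0 x₂) := by
      apply antitoneOn_of_deriv_nonpos (convex_Ioc 0 x₂)
      · exact fun x hx => (hder x hx.1).continuousAt.continuousWithinAt
      · intro x hx
        rw [interior_Ioc] at hx
        exact (hder x hx.1).differentiableAt.differentiableWithinAt
      · intro x hx
        rw [interior_Ioc] at hx
        rw [(hder x hx.1).deriv]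
        have h1 := hvpp x hx.1 hx.2.le
        have hxa : 0 < x ^ (α - 2) := Real.rpow_pos_of_pos hx.1 _
        have hceq : C * (1 - α) = v₁ / σ^2 := by
          rw [hCdef]
          field_simp
        have hid : C * ((α - 1) * x ^ (α - 2)) = -((v₁ / σ^2) * x ^ (α - 2)) := by
          rw [← hceq]
          ring
        rw [hid]
        nlinarith
    -- blow-up of x ^ (α - 1) near 0
    have hblow : Tendsto (fun x : ℝ => x ^ (α - 1)) (𝓝[>] 0) atTop := by
      have h1 : Tendsto (fun x : ℝ => (x⁻¹) ^ (1 - α)) (𝓝[>] 0) atTop :=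
        (tendsto_rpow_atTop hα2).comp tendsto_inv_nhdsGT_zero
      apply h1.congr'
      filter_upwards [self_mem_nhdsWithin] with x hx
      have hx0 : (0:ℝ) < x := hx
      rw [Real.inv_rpow hx0.le, ← Real.rpow_neg hx0.le]
      norm_num
    obtain ⟨x₃, hbig, hx₃mem⟩ := ((hblow.eventually
        (eventually_gt_atTop ((L - v' x₂ + C * x₂ ^ (α - 1) + 1) / C))).and
      (eventually_of_mem (Ioc_mem_nhdsGT_of_mem ⟨le_refl (0:ℝ), hx₂0⟩) fun y hy => hy)).exists
    have hhle : h x₂ ≤ h x₃ := hanti2 hx₃mem ⟨hx₂0, le_refl x₂⟩ hx₃mem.2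
    have hLx₃ := hL1 x₃ hx₃mem.1
    have hmul := (div_lt_iff₀ hC).1 hbig
    simp only [hhdef] at hhle
    nlinarith

  rw [tendsto_atTop]
  intro b
  obtain ⟨x₀, hx₀, hbx₀⟩ := key b
  filter_upwards [Ioc_mem_nhdsGT_of_mem ⟨le_refl (0:ℝ), hx₀⟩] with y hy
  exact hbx₀.trans (hv'anti y x₀ hy.1 hy.2)
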